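/- Let F : ℝ^m → ℝ^n be twice continuously differentiable with F(θ*) = 0 at some point θ*, and set f(θ) = (1/2)‖F(θ)‖₂². Suppose the Jacobian J_F has constant rank r on a neighborhood U of θ*. Then there exist an open neighborhood V ⊆ U of θ* and a constant μ > 0 such that the Polyak–Łojasiewicz inequality ‖∇f(θ)‖₂² ≥ 2μ f(θ) holds for all θ ∈ V. -/

import Mathlib

set_option maxHeartbeats 4000000
set_option synthInstance.maxHeartbeats 400000

open RealInnerProductSpace Metric Set Topology Filter

lemma grad_half_normsq {E G : Type*} [NormedAddCommGroup E] [InnerProductSpace ℝ E]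
    [NormedAddCommGroup G] [InnerProductSpace ℝ G] [CompleteSpace E] [CompleteSpace G]
    (F : E → G) (θ : E) (hd : DifferentiableAt ℝ F θ) :
    HasGradientAt (fun x => (1 / 2 : ℝ) * ‖F x‖ ^ 2) ((fderiv ℝ F θ).adjoint (F θ)) θ := by
  set J := fderiv ℝ F θ
  have hJ : HasFDerivAt F J θ := hd.hasFDerivAt
  have h1 : HasFDerivAt (fun x => ⟪F x, F x⟫)
      ((fderivInnerCLM ℝ (F θ, F θ)).comp (J.prod J)) θ := hJ.inner ℝ hJ
  have h2 : HasFDerivAt (fun x => (1 / 2 : ℝ) * ⟪F x, F x⟫)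
      ((1 / 2 : ℝ) • ((fderivInnerCLM ℝ (F θ, F θ)).comp (J.prod J))) θ := by
    exact h1.const_mul (1/2 : ℝ)
  have heq : (fun x => (1 / 2 : ℝ) * ⟪F x, F x⟫) = fun x => (1 / 2 : ℝ) * ‖F x‖ ^ 2 := by
    funext x; rw [real_inner_self_eq_norm_sq]
  rw [heq] at h2
  rw [hasGradientAt_iff_hasFDerivAt]
  convert h2 using 1
  · rfl
  · rfl
  ext v
  simp only [InnerProductSpace.toDual_apply_apply, ContinuousLinearMap.coe_smul',
    Pi.smul_apply, ContinuousLinearMap.coe_comp', Function.comp_apply,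
    ContinuousLinearMap.prod_apply, fderivInnerCLM_apply, smul_eq_mul]
  rw [ContinuousLinearMap.adjoint_inner_left]
  rw [real_inner_comm (F θ) (J v)]
  ring

lemma antilip_on_submodule {G E : Type*} [NormedAddCommGroup G] [NormedSpace ℝ G]
    [NormedAddCommGroup E] [NormedSpace ℝ E] (Y : Submodule ℝ G) [FiniteDimensional ℝ Y]
    (T : G →L[ℝ] E) (hinj : ∀ y ∈ Y, T y = 0 → y = 0) :
    ∃ σ : ℝ, 0 < σ ∧ ∀ y ∈ Y, σ * ‖y‖ ≤ ‖T y‖ := by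
  set f : Y →ₗ[ℝ] E := (T : G →ₗ[ℝ] E).comp Y.subtype with hf
  have hker : LinearMap.ker f = ⊥ := by
    rw [LinearMap.ker_eq_bot']
    intro y hy
    exact Subtype.ext (hinj y.1 y.2 hy)
  obtain ⟨K, hK0, hK⟩ := f.exists_antilipschitzWith hker
  refine ⟨(K : ℝ)⁻¹, by positivity, ?_⟩
  intro y hy
  have h := hK.le_mul_dist ⟨y, hy⟩ 0
  simp only [map_zero, dist_zero_right] at h
  have hy1 : ‖(⟨y, hy⟩ : Y)‖ = ‖y‖ := rfl
  have hy2 : f ⟨y, hy⟩ = T y := rfl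
  rw [hy1, hy2] at h
  calc (K:ℝ)⁻¹ * ‖y‖ ≤ (K:ℝ)⁻¹ * ((K:ℝ) * ‖T y‖) := by
        apply mul_le_mul_of_nonneg_left h (by positivity)
    _ = ‖T y‖ := by field_simp

private lemma arith_aux2 (Lr Cr x y : ℝ) (hx : 0 ≤ x) (hy : 0 ≤ y) (hL : 0 ≤ Lr) (hC : 0 ≤ Cr)
    (h : x ≤ Lr * (Cr * y)) : ((Lr + 1) * (Cr + 1))⁻¹ * x ≤ y := by
  have h1 : (0:ℝ) < (Lr + 1) * (Cr + 1) := by positivity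
  have h2 : x ≤ ((Lr + 1) * (Cr + 1)) * y := by nlinarith
  calc ((Lr + 1) * (Cr + 1))⁻¹ * x ≤ ((Lr + 1) * (Cr + 1))⁻¹ * (((Lr + 1) * (Cr + 1)) * y) :=
        mul_le_mul_of_nonneg_left h2 (by positivity)
    _ = y := by field_simp

private lemma arith_aux3 (a b x : ℝ) (h : b ≠ 0) : a * (b⁻¹ * x) = 2 * (a / (2 * b)) * x := by
  field_simp

private lemma arith_aux (b p j : ℝ) (hb : 0 ≤ b) (hp : 0 ≤ p) (hj : 0 ≤ j)
    (h : j * ((b + 1) * (p + 1) + 1) < 1) : b * (p * j) < 1 := by nlinarith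

/-- **Local Polyak–Łojasiewicz inequality for nonlinear least squares.**
If `F : ℝ^m → ℝ^n` is `C²` with `F(θ*) = 0` and its Jacobian has constant rank `r`
on a neighborhood `U` of `θ*`, then the objective `f(θ) = ½‖F(θ)‖²` satisfies a
PL inequality `‖∇f(θ)‖² ≥ 2 μ f(θ)` on some open neighborhood `V ⊆ U` of `θ*`. -/
theorem pl_inequality_near_regular_equilibrium
    (m n : ℕ) (F : EuclideanSpace ℝ (Fin m) → EuclideanSpace ℝ (Fin n))
    (θstar : EuclideanSpace ℝ (Fin m)) (r : ℕ) (U : Set (EuclideanSpace ℝ (Fin m)))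
    (hF : ContDiff ℝ 2 F)
    (hFzero : F θstar = 0)
    (hU_open : IsOpen U) (hθU : θstar ∈ U)
    (hrank : ∀ θ ∈ U, Module.finrank ℝ (LinearMap.range ((fderiv ℝ F θ : EuclideanSpace ℝ (Fin m) →L[ℝ] EuclideanSpace ℝ (Fin n)) :
      EuclideanSpace ℝ (Fin m) →ₗ[ℝ] EuclideanSpace ℝ (Fin n))) = r) :
    ∃ (V : Set (EuclideanSpace ℝ (Fin m))) (μ : ℝ), IsOpen V ∧ V ⊆ U ∧ θstar ∈ V ∧ 0 < μ ∧
      ∀ θ ∈ V, ‖gradient (fun x => (1 / 2 : ℝ) * ‖F x‖ ^ 2) θ‖ ^ 2 ≥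
        2 * μ * ((1 / 2 : ℝ) * ‖F θ‖ ^ 2) := by
  classical
  have hF1 : ContDiff ℝ 1 F := hF.of_le (by norm_num)
  have hFd : Differentiable ℝ F := hF1.differentiable one_ne_zero
  set J : EuclideanSpace ℝ (Fin m) → (EuclideanSpace ℝ (Fin m) →L[ℝ] EuclideanSpace ℝ (Fin n)) :=
    fderiv ℝ F with hJdef
  have hJcont : Continuous J := hF1.continuous_fderiv one_ne_zero
  set Js := J θstar with hJs
  set K : Submodule ℝ (EuclideanSpace ℝ (Fin m)) := LinearMap.ker (Js : EuclideanSpace ℝ (Fin m) →ₗ[ℝ] EuclideanSpace ℝ (Fin n)) with hKdef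
  set Y : Submodule ℝ (EuclideanSpace ℝ (Fin n)) := LinearMap.range (Js : EuclideanSpace ℝ (Fin m) →ₗ[ℝ] EuclideanSpace ℝ (Fin n)) with hYdef
  set PK := K.orthogonalProjectionOnto with hPK
  set PY := Y.orthogonalProjectionOnto with hPYdef
  set A : EuclideanSpace ℝ (Fin m) →L[ℝ] K × Y := PK.prod (PY.comp Js) with hAdef
  -- A is bijective
  have hAinj : Function.Injective A := by
    rw [injective_iff_map_eq_zero]
    intro v hv
    have hv1 : PK v = 0 := congrArg Prod.fst hv
    have hv2 : PY (Js v) = 0 := congrArg Prod.snd hv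
    have hmem : Js v ∈ Y := ⟨v, rfl⟩
    have h1 : (PY (Js v) : EuclideanSpace ℝ (Fin n)) = Js v :=
      Submodule.starProjection_eq_self_iff.mpr hmem
    rw [hv2] at h1
    have hvK : v ∈ K := by
      simp only [hKdef, LinearMap.mem_ker]
      exact h1.symm
    have h2 : (PK v : EuclideanSpace ℝ (Fin m)) = v :=
      Submodule.starProjection_eq_self_iff.mpr hvK
    rw [hv1] at h2
    exact h2.symm
  have hdim : Module.finrank ℝ (EuclideanSpace ℝ (Fin m)) = Module.finrank ℝ (K × Y) := by
    have h1 := LinearMap.finrank_range_add_finrank_ker (Js : EuclideanSpace ℝ (Fin m) →ₗ[ℝ] EuclideanSpace ℝ (Fin n))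
    rw [Module.finrank_prod]
    rw [show LinearMap.range ((Js : EuclideanSpace ℝ (Fin m) →ₗ[ℝ] EuclideanSpace ℝ (Fin n))) = Y from rfl,
      show LinearMap.ker ((Js : EuclideanSpace ℝ (Fin m) →ₗ[ℝ] EuclideanSpace ℝ (Fin n))) = K from rfl] at h1
    omega
  have hAsurj : Function.Surjective A :=
    (LinearMap.injective_iff_surjective_of_finrank_eq_finrank hdim).1 hAinj
  set e : EuclideanSpace ℝ (Fin m) ≃L[ℝ] K × Y :=
    (LinearEquiv.ofBijective (A : EuclideanSpace ℝ (Fin m) →ₗ[ℝ] K × Y)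
      ⟨hAinj, hAsurj⟩).toContinuousLinearEquiv with hedef
  have hecoe : (e : EuclideanSpace ℝ (Fin m) →L[ℝ] K × Y) = A := ContinuousLinearMap.ext fun v => rfl
  -- the map Φ
  set Φ : EuclideanSpace ℝ (Fin m) → K × Y := fun θ => (PK (θ - θstar), PY (F θ)) with hΦdef
  have hΦ2 : ContDiff ℝ 2 Φ :=
    (PK.contDiff.comp (contDiff_id.sub contDiff_const)).prodMk (PY.contDiff.comp hF)
  have hΦθ : Φ θstar = 0 := by
    simp [hΦdef, hFzero]
  have hΦd : HasFDerivAt Φ (A : EuclideanSpace ℝ (Fin m) →L[ℝ] K × Y) θstar := by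
    have h1 : HasFDerivAt (fun θ : EuclideanSpace ℝ (Fin m) => θ - θstar)
        (ContinuousLinearMap.id ℝ (EuclideanSpace ℝ (Fin m))) θstar :=
      (hasFDerivAt_id _).sub_const _
    have h2 : HasFDerivAt (fun θ => PK (θ - θstar))
        (PK.comp (ContinuousLinearMap.id ℝ (EuclideanSpace ℝ (Fin m)))) θstar :=
      PK.hasFDerivAt.comp θstar h1
    have h3 : HasFDerivAt (fun θ => PY (F θ)) (PY.comp Js) θstar :=
      PY.hasFDerivAt.comp θstar (hFd θstar).hasFDerivAt
    have h4 := h2.prodMk h3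
    rw [ContinuousLinearMap.comp_id] at h4
    exact h4
  have hΦd' : HasFDerivAt Φ (e : EuclideanSpace ℝ (Fin m) →L[ℝ] K × Y) θstar := by
    rw [hecoe]; exact hΦd
  have hone : (1 : WithTop ℕ∞) ≤ 2 := by norm_num
  have hstrict : HasStrictFDerivAt Φ (e : EuclideanSpace ℝ (Fin m) →L[ℝ] K × Y) θstar :=
    hΦ2.contDiffAt.hasStrictFDerivAt' hΦd' two_ne_zero
  set Ψ := hstrict.localInverse Φ e θstar with hΨdef
  have hΨθ : Ψ (Φ θstar) = θstar := hstrict.localInverse_apply_image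
  have hΨcd : ContDiffAt ℝ 1 Ψ (Φ θstar) :=
    (ContDiffAt.to_localInverse hΦ2.contDiffAt hΦd' two_ne_zero).of_le (by norm_num)
  -- sigma: adjoint bounded below on Y
  have hYinj : ∀ y ∈ Y, Js.adjoint y = 0 → y = 0 := by
    intro y hy h0
    obtain ⟨x, hx⟩ := hy
    have h2 : ⟪y, Js x⟫ = 0 := by
      rw [← ContinuousLinearMap.adjoint_inner_left, h0, inner_zero_left]
    rw [show Js x = y from hx] at h2
    exact inner_self_eq_zero.mp h2
  obtain ⟨σ, hσ0, hσ⟩ := antilip_on_submodule Y Js.adjoint hYinj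
  -- Lipschitz constants
  obtain ⟨L, t, ht, hLip⟩ := (hF1.contDiffAt (x := θstar)).exists_lipschitzOnWith
  obtain ⟨CΨ, s, hs, hΨLip⟩ := hΨcd.exists_lipschitzOnWith
  set c₁ : ℝ := ((L : ℝ) + 1) * ((CΨ : ℝ) + 1) with hc₁
  have hc₁0 : 0 < c₁ := by positivity
  set ε : ℝ := σ / (2 * c₁) with hε
  have hε0 : 0 < ε := by positivity
  set c : ℝ := σ / (2 * c₁) with hc
  have hc0 : 0 < c := hε0
  -- finrank of Y
  have hYr : Module.finrank ℝ Y = r := hrank θstar hθU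
  -- kernel equality lemma
  have hker : ∀ θ', θ' ∈ U → Function.Surjective (PY.comp (J θ')) →
      LinearMap.ker ((PY.comp (J θ')) : EuclideanSpace ℝ (Fin m) →ₗ[ℝ] Y) = LinearMap.ker ((J θ') : EuclideanSpace ℝ (Fin m) →ₗ[ℝ] EuclideanSpace ℝ (Fin n)) := by
    intro θ' hθ'U hsurj
    have hle : LinearMap.ker ((J θ') : EuclideanSpace ℝ (Fin m) →ₗ[ℝ] EuclideanSpace ℝ (Fin n)) ≤ LinearMap.ker ((PY.comp (J θ')) : EuclideanSpace ℝ (Fin m) →ₗ[ℝ] Y) := by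
      intro v hv
      rw [LinearMap.mem_ker] at hv ⊢
      simp [show (J θ') v = 0 from hv]
    have h1 := LinearMap.finrank_range_add_finrank_ker
      ((J θ') : EuclideanSpace ℝ (Fin m) →ₗ[ℝ] EuclideanSpace ℝ (Fin n))
    have h2 := LinearMap.finrank_range_add_finrank_ker
      ((PY.comp (J θ')) : EuclideanSpace ℝ (Fin m) →ₗ[ℝ] Y)
    rw [show LinearMap.range ((J θ' : EuclideanSpace ℝ (Fin m) →ₗ[ℝ] EuclideanSpace ℝ (Fin n))) = LinearMap.range ((J θ') : EuclideanSpace ℝ (Fin m) →ₗ[ℝ] EuclideanSpace ℝ (Fin n)) from rfl,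
      show LinearMap.ker ((J θ' : EuclideanSpace ℝ (Fin m) →ₗ[ℝ] EuclideanSpace ℝ (Fin n))) = LinearMap.ker ((J θ') : EuclideanSpace ℝ (Fin m) →ₗ[ℝ] EuclideanSpace ℝ (Fin n)) from rfl] at h1
    rw [show LinearMap.range (((PY.comp (J θ')) : EuclideanSpace ℝ (Fin m) →ₗ[ℝ] Y)) = LinearMap.range ((PY.comp (J θ')) : EuclideanSpace ℝ (Fin m) →ₗ[ℝ] Y) from rfl,
      show LinearMap.ker (((PY.comp (J θ')) : EuclideanSpace ℝ (Fin m) →ₗ[ℝ] Y)) = LinearMap.ker ((PY.comp (J θ')) : EuclideanSpace ℝ (Fin m) →ₗ[ℝ] Y) from rfl] at h2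
    have hr1 : Module.finrank ℝ (LinearMap.range ((J θ') : EuclideanSpace ℝ (Fin m) →ₗ[ℝ] EuclideanSpace ℝ (Fin n))) = r := hrank θ' hθ'U
    have hr2 : Module.finrank ℝ (LinearMap.range ((PY.comp (J θ')) : EuclideanSpace ℝ (Fin m) →ₗ[ℝ] Y)) = r := by
      rw [LinearMap.range_eq_top.mpr hsurj, finrank_top]
      exact hYr
    exact (Submodule.eq_of_le_of_finrank_le hle (by omega)).symm
  -- eventual surjectivity of PY ∘ J θ
  set B : (K × Y) →L[ℝ] EuclideanSpace ℝ (Fin m) := (e.symm : (K × Y) →L[ℝ] EuclideanSpace ℝ (Fin m)) with hBdef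
  have hBA : B.comp A = ContinuousLinearMap.id ℝ (EuclideanSpace ℝ (Fin m)) := by
    refine ContinuousLinearMap.ext fun v => ?_
    show B (A v) = v
    rw [show A v = e v from rfl]
    exact e.symm_apply_apply v
  set δ : ℝ := 1 / ((‖B‖ + 1) * (‖PY‖ + 1) + 1) with hδdef
  have hδ0 : 0 < δ := by positivity
  have hJat : ContinuousAt J θstar := hJcont.continuousAt
  have hTsurj_ev : ∀ᶠ θ' in 𝓝 θstar, Function.Surjective (PY.comp (J θ')) := by
    have hball : ∀ᶠ θ' in 𝓝 θstar, dist (J θ') Js < δ :=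
      hJat.tendsto (Metric.ball_mem_nhds _ hδ0)
    filter_upwards [hball] with θ' hθ'
    rw [dist_eq_norm] at hθ'
    set Tθ := PY.comp (J θ') with hTθ
    set Sθ := PK.prod Tθ with hSθ
    have hdiff : Sθ - A = ((0 : EuclideanSpace ℝ (Fin m) →L[ℝ] K)).prod (Tθ - PY.comp Js) := by
      refine ContinuousLinearMap.ext fun v => ?_
      simp [hSθ, hAdef, Prod.ext_iff]
    have hTdiff : Tθ - PY.comp Js = PY.comp (J θ' - Js) := by
      refine ContinuousLinearMap.ext fun v => ?_
      simp [hTθ]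
    have hnorm1 : ‖Sθ - A‖ ≤ ‖PY‖ * ‖J θ' - Js‖ := by
      rw [hdiff, ContinuousLinearMap.opNorm_prod]
      rw [Prod.norm_def]
      simp only [norm_zero, ContinuousLinearMap.opNorm_zero]
      rw [max_eq_right (norm_nonneg _), hTdiff]
      exact ContinuousLinearMap.opNorm_comp_le _ _
    have hBS : ‖ContinuousLinearMap.id ℝ (EuclideanSpace ℝ (Fin m)) - B.comp Sθ‖ < 1 := by
      have heq2 : ContinuousLinearMap.id ℝ (EuclideanSpace ℝ (Fin m)) - B.comp Sθ
          = B.comp (A - Sθ) := by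
        rw [ContinuousLinearMap.comp_sub, hBA]
      rw [heq2]
      have h5 : ‖B.comp (A - Sθ)‖ ≤ ‖B‖ * ‖Sθ - A‖ := by
        rw [norm_sub_rev (Sθ) A]
        exact ContinuousLinearMap.opNorm_comp_le _ _
      have h6 : ‖B‖ * ‖Sθ - A‖ ≤ ‖B‖ * (‖PY‖ * ‖J θ' - Js‖) :=
        mul_le_mul_of_nonneg_left hnorm1 (ContinuousLinearMap.opNorm_nonneg _)
      have hB0 : (0:ℝ) ≤ ‖B‖ := ContinuousLinearMap.opNorm_nonneg _
      have hP0 : (0:ℝ) ≤ ‖PY‖ := ContinuousLinearMap.opNorm_nonneg _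
      have hJ0 : (0:ℝ) ≤ ‖J θ' - Js‖ := ContinuousLinearMap.opNorm_nonneg _
      have hδval : ‖J θ' - Js‖ < 1 / ((‖B‖ + 1) * (‖PY‖ + 1) + 1) := hθ'
      have hd0 : (0:ℝ) < (‖B‖ + 1) * (‖PY‖ + 1) + 1 := by positivity
      rw [lt_div_iff₀ hd0] at hδval
      calc ‖B.comp (A - Sθ)‖ ≤ ‖B‖ * (‖PY‖ * ‖J θ' - Js‖) := le_trans h5 h6
        _ < 1 := arith_aux _ _ _ hB0 hP0 hJ0 hδval
    have hunit : IsUnit (B.comp Sθ) := by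
      have h1 : ‖(1 : EuclideanSpace ℝ (Fin m) →L[ℝ] EuclideanSpace ℝ (Fin m)) - B.comp Sθ‖ < 1 := hBS
      have := (Units.oneSub _ h1).isUnit
      simpa using this
    obtain ⟨u, hu⟩ := hunit
    have hsurjBS : Function.Surjective (B.comp Sθ) := by
      intro x
      refine ⟨((↑u⁻¹ : EuclideanSpace ℝ (Fin m) →L[ℝ] EuclideanSpace ℝ (Fin m))) x, ?_⟩
      have h7 : (B.comp Sθ) ((↑u⁻¹ : EuclideanSpace ℝ (Fin m) →L[ℝ] EuclideanSpace ℝ (Fin m)) x)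
          = ((B.comp Sθ) * ↑u⁻¹) x := rfl
      rw [h7, ← hu, u.mul_inv]
      rfl
    have hSsurj : Function.Surjective Sθ := by
      intro w
      obtain ⟨v, hv⟩ := hsurjBS (B w)
      refine ⟨v, ?_⟩
      have hBinj : Function.Injective B := e.symm.injective
      exact hBinj hv
    intro y
    obtain ⟨v, hv⟩ := hSsurj ((0 : K), y)
    exact ⟨v, congrArg Prod.snd hv⟩
  -- collect θ-space facts
  have hUev : ∀ᶠ θ' in 𝓝 θstar, θ' ∈ U := hU_open.mem_nhds hθU
  have hJev : ∀ᶠ θ' in 𝓝 θstar, ‖J θ' - Js‖ ≤ ε := by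
    have hball : ∀ᶠ θ' in 𝓝 θstar, dist (J θ') Js < ε :=
      hJat.tendsto (Metric.ball_mem_nhds _ hε0)
    filter_upwards [hball] with θ' h
    rw [dist_eq_norm] at h
    exact le_of_lt h
  have htev : ∀ᶠ θ' in 𝓝 θstar, θ' ∈ t := ht
  have hLIev : ∀ᶠ θ' in 𝓝 θstar, Ψ (Φ θ') = θ' := hstrict.eventually_left_inverse
  obtain ⟨ρ₁, hρ₁0, hρ₁⟩ := Metric.eventually_nhds_iff.mp
    (hUev.and (hJev.and (hTsurj_ev.and (htev.and hLIev))))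
  -- collect p-space facts
  have hRIev : ∀ᶠ p in 𝓝 (Φ θstar), Φ (Ψ p) = p := hstrict.eventually_right_inverse
  have hsev : ∀ᶠ p in 𝓝 (Φ θstar), p ∈ s := hs
  obtain ⟨O, hOnhds, hOcd⟩ := hΨcd.contDiffOn le_rfl (by simp)
  have hOev : ∀ᶠ p in 𝓝 (Φ θstar), p ∈ O := hOnhds
  have hΨcont : ContinuousAt Ψ (Φ θstar) := hstrict.localInverse_continuousAt
  have hΨballev : ∀ᶠ p in 𝓝 (Φ θstar), Ψ p ∈ Metric.ball θstar ρ₁ := by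
    have h8 : Metric.ball θstar ρ₁ ∈ 𝓝 (Ψ (Φ θstar)) := by
      rw [hΨθ]; exact Metric.ball_mem_nhds _ hρ₁0
    exact hΨcont.tendsto h8
  obtain ⟨ρ₂, hρ₂0, hρ₂⟩ := Metric.eventually_nhds_iff.mp
    (hRIev.and (hsev.and (hOev.and hΨballev)))
  have hballO : Metric.ball (Φ θstar) ρ₂ ⊆ O := fun p hp => (hρ₂ (mem_ball.mp hp)).2.2.1
  have hΨdOn : DifferentiableOn ℝ Ψ (Metric.ball (Φ θstar) ρ₂) :=
    (hOcd.differentiableOn one_ne_zero).mono hballO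
  have hq0 : ∀ k : K, dist ((k, (0:Y)) : K × Y) (Φ θstar) = ‖k‖ := by
    intro k
    rw [hΦθ, dist_zero_right, Prod.norm_def]
    simp only [norm_zero]
    exact max_eq_left (norm_nonneg k)
  have hconst0 : ∀ k : K, ‖k‖ < ρ₂ → PY (F (Ψ (k, (0:Y)))) = 0 := by
    intro k hk
    have hd : dist ((k,(0:Y)) : K × Y) (Φ θstar) < ρ₂ := by rw [hq0]; exact hk
    have hRI := (hρ₂ hd).1
    have h10 := congrArg Prod.snd hRI
    simpa [hΦdef] using h10
  have hzero : ∀ k : K, ‖k‖ < ρ₂ → F (Ψ (k, (0:Y))) = 0 := by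
    have key : ∀ k ∈ Metric.ball (0:K) ρ₂, HasFDerivWithinAt (fun k' : K => F (Ψ (k', (0:Y))))
        (0 : K →L[ℝ] EuclideanSpace ℝ (Fin n)) (Metric.ball (0:K) ρ₂) k := by
      intro k hk
      rw [mem_ball, dist_zero_right] at hk
      have hd : dist ((k,(0:Y)) : K × Y) (Φ θstar) < ρ₂ := by rw [hq0]; exact hk
      obtain ⟨hRI, hins, hinO, hΨball⟩ := hρ₂ hd
      set θ₀ := Ψ ((k : K), (0:Y)) with hθ₀def
      obtain ⟨hθ₀U, hθ₀J, hθ₀surj, hθ₀t, hθ₀LI⟩ := hρ₁ (mem_ball.mp hΨball)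
      have hqball : ((k,(0:Y)) : K × Y) ∈ Metric.ball (Φ θstar) ρ₂ := mem_ball.mpr hd
      have hΨdiff : DifferentiableAt ℝ Ψ ((k, (0:Y)) : K × Y) :=
        (hΨdOn _ hqball).differentiableAt (Metric.isOpen_ball.mem_nhds hqball)
      set ι : K →L[ℝ] K × Y := ContinuousLinearMap.inl ℝ K Y with hιdef
      set Dψ := (fderiv ℝ Ψ ((k, (0:Y)) : K × Y)).comp ι with hDψdef
      have hψd : HasFDerivAt (fun k' : K => Ψ (k', (0:Y))) Dψ k :=
        hΨdiff.hasFDerivAt.comp k ι.hasFDerivAt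
      have hPYF : HasFDerivAt (fun k' : K => PY (F (Ψ (k', (0:Y)))))
          ((PY.comp (J θ₀)).comp Dψ) k := by
        have h3 : HasFDerivAt (fun x => PY (F x)) (PY.comp (J θ₀)) θ₀ :=
          PY.hasFDerivAt.comp θ₀ (hFd θ₀).hasFDerivAt
        exact h3.comp k hψd
      have hev0 : (fun k' : K => PY (F (Ψ (k', (0:Y))))) =ᶠ[𝓝 k] fun _ => (0 : Y) := by
        have hball2 : Metric.ball (0:K) ρ₂ ∈ 𝓝 k :=
          Metric.isOpen_ball.mem_nhds (by rw [mem_ball, dist_zero_right]; exact hk)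
        filter_upwards [hball2] with k' hk'
        rw [mem_ball, dist_zero_right] at hk'
        exact hconst0 k' hk'
      have hderiv0 : (PY.comp (J θ₀)).comp Dψ = 0 :=
        ((hev0.hasFDerivAt_iff).mp hPYF).unique (hasFDerivAt_const _ _)
      have hkereq := hker θ₀ hθ₀U hθ₀surj
      have hJψ0 : (J θ₀).comp Dψ = 0 := by
        refine ContinuousLinearMap.ext fun v => ?_
        have hv : Dψ v ∈ LinearMap.ker ((PY.comp (J θ₀)) : EuclideanSpace ℝ (Fin m) →ₗ[ℝ] Y) := by
          rw [LinearMap.mem_ker]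
          have h11 := congrArg (fun (T : K →L[ℝ] Y) => T v) hderiv0
          simpa using h11
        rw [hkereq, LinearMap.mem_ker] at hv
        simpa using hv
      have hFψ : HasFDerivAt (fun k' : K => F (Ψ (k', (0:Y)))) ((J θ₀).comp Dψ) k :=
        (hFd θ₀).hasFDerivAt.comp k hψd
      rw [hJψ0] at hFψ
      exact hFψ.hasFDerivWithinAt
    intro k hk
    have hk' : k ∈ Metric.ball (0:K) ρ₂ := by rw [mem_ball, dist_zero_right]; exact hk
    have h0ball : (0:K) ∈ Metric.ball (0:K) ρ₂ := mem_ball_self hρ₂0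
    have hmvt := (convex_ball (0:K) ρ₂).norm_image_sub_le_of_norm_hasFDerivWithin_le
      (fun x hx => key x hx) (fun x hx => ContinuousLinearMap.opNorm_zero.le) h0ball hk'
    have hΨ00 : Ψ (((0:K), (0:Y)) : K × Y) = θstar := by
      have h12 : ((((0:K),(0:Y))) : K × Y) = Φ θstar := by rw [hΦθ]; exact Prod.mk_zero_zero
      rw [h12, hΨθ]
    have h13 : ‖F (Ψ (k, (0:Y))) - F (Ψ (((0:K), (0:Y)) : K × Y))‖ ≤ 0 := by
      simpa using hmvt
    rw [hΨ00, hFzero, sub_zero] at h13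
    exact norm_le_zero_iff.mp h13
  -- the open neighborhood V
  set V : Set (EuclideanSpace ℝ (Fin m)) :=
    Metric.ball θstar ρ₁ ∩ Φ ⁻¹' (Metric.ball (Φ θstar) ρ₂) with hVdef
  have hΦcont : Continuous Φ := hΦ2.continuous
  have hVopen : IsOpen V := Metric.isOpen_ball.inter (Metric.isOpen_ball.preimage hΦcont)
  have hVU : V ⊆ U := fun θ hθ => (hρ₁ (mem_ball.mp hθ.1)).1
  have hVθ : θstar ∈ V := ⟨mem_ball_self hρ₁0, by
    rw [mem_preimage]; exact mem_ball_self hρ₂0⟩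
  set μ : ℝ := ε ^ 2 with hμdef
  refine ⟨V, μ, hVopen, hVU, hVθ, by positivity, ?_⟩
  intro θ hθV
  obtain ⟨hθball, hθpre⟩ := hθV
  obtain ⟨hθU', hθJ, hθsurj, hθt, hθLI⟩ := hρ₁ (mem_ball.mp hθball)
  rw [mem_preimage, mem_ball] at hθpre
  set p := Φ θ with hpdef
  set kk := p.1 with hkdef
  set θ₀ := Ψ ((kk, (0:Y)) : K × Y) with hθ₀def
  have hknorm : ‖kk‖ ≤ dist p (Φ θstar) := by
    rw [hΦθ, dist_zero_right]
    exact norm_fst_le p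
  have hkball : ‖kk‖ < ρ₂ := lt_of_le_of_lt hknorm hθpre
  have hFθ₀ : F θ₀ = 0 := hzero kk hkball
  have hqd : dist ((kk, (0:Y)) : K × Y) (Φ θstar) < ρ₂ := by rw [hq0]; exact hkball
  obtain ⟨hRIq, hinsq, hinOq, hΨballq⟩ := hρ₂ hqd
  obtain ⟨hRIp, hinsp, hinOp, hΨballp⟩ := hρ₂ hθpre
  have hθeq : Ψ p = θ := hθLI
  have hdistΨ : dist θ θ₀ ≤ (CΨ : ℝ) * dist p ((kk, (0:Y)) : K × Y) := by
    rw [← hθeq]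
    exact hΨLip.dist_le_mul p hinsp _ hinsq
  have hdistpq : dist p ((kk, (0:Y)) : K × Y) = ‖(p.2 : Y)‖ := by
    rw [dist_eq_norm]
    have h18 : p - ((kk, (0:Y)) : K × Y) = (((0 : K), p.2) : K × Y) := by
      rw [Prod.ext_iff]
      constructor
      · simp [hkdef]
      · simp
    rw [h18, Prod.norm_def]
    simp only [norm_zero]
    exact max_eq_right (norm_nonneg _)
  have hθ₀t : θ₀ ∈ t := (hρ₁ (mem_ball.mp hΨballq)).2.2.2.1
  have hFLip : dist (F θ) (F θ₀) ≤ (L : ℝ) * dist θ θ₀ :=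
    hLip.dist_le_mul θ hθt θ₀ hθ₀t
  have hFnorm : ‖F θ‖ ≤ (L:ℝ) * ((CΨ:ℝ) * ‖(p.2 : Y)‖) := by
    have h19 : dist (F θ) (F θ₀) = ‖F θ‖ := by rw [hFθ₀, dist_zero_right]
    rw [← h19]
    calc dist (F θ) (F θ₀) ≤ (L : ℝ) * dist θ θ₀ := hFLip
      _ ≤ (L : ℝ) * ((CΨ : ℝ) * dist p ((kk, (0:Y)) : K × Y)) := by
          apply mul_le_mul_of_nonneg_left _ (NNReal.coe_nonneg L)
          apply le_trans hdistΨ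
          exact le_of_eq rfl
      _ = (L:ℝ) * ((CΨ:ℝ) * ‖(p.2 : Y)‖) := by rw [hdistpq]
  have hPYlow : c₁⁻¹ * ‖F θ‖ ≤ ‖(p.2 : Y)‖ := by
    rw [hc₁]
    exact arith_aux2 _ _ _ _ (norm_nonneg _) (norm_nonneg _)
      (NNReal.coe_nonneg L) (NNReal.coe_nonneg CΨ) hFnorm
  -- adjoint estimates
  set y : EuclideanSpace ℝ (Fin n) := ((PY (F θ) : Y) : EuclideanSpace ℝ (Fin n)) with hydef
  have hpy : ‖(p.2 : Y)‖ = ‖y‖ := rfl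
  have hw : F θ - y ∈ Yᗮ := Submodule.sub_starProjection_mem_orthogonal (K := Y) (F θ)
  have hJsw : Js.adjoint (F θ - y) = 0 := by
    have h14 : ⟪Js.adjoint (F θ - y), Js.adjoint (F θ - y)⟫ = 0 := by
      rw [ContinuousLinearMap.adjoint_inner_left]
      exact (Submodule.mem_orthogonal' Y _).mp hw _ ⟨_, rfl⟩
    exact inner_self_eq_zero.mp h14
  have hJsdecomp : Js.adjoint (F θ) = Js.adjoint y := by
    rw [map_sub] at hJsw
    exact sub_eq_zero.mp hJsw
  have hσy : σ * ‖y‖ ≤ ‖Js.adjoint y‖ := hσ y (SetLike.coe_mem _)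
  have hadj : ‖(J θ).adjoint (F θ) - Js.adjoint (F θ)‖ ≤ ε * ‖F θ‖ := by
    have h15 : ((J θ) - Js).adjoint = (J θ).adjoint - Js.adjoint :=
      map_sub (ContinuousLinearMap.adjoint) (J θ) Js
    have h20 : (J θ).adjoint (F θ) - Js.adjoint (F θ) = ((J θ) - Js).adjoint (F θ) := by
      rw [h15]; rfl
    rw [h20]
    calc ‖((J θ) - Js).adjoint (F θ)‖ ≤ ‖((J θ) - Js).adjoint‖ * ‖F θ‖ :=
          ContinuousLinearMap.le_opNorm _ _
      _ ≤ ε * ‖F θ‖ := by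
          apply mul_le_mul_of_nonneg_right _ (norm_nonneg _)
          rw [LinearIsometryEquiv.norm_map ContinuousLinearMap.adjoint]
          exact hθJ
  have hlow : ε * ‖F θ‖ ≤ ‖(J θ).adjoint (F θ)‖ := by
    have t1 : σ * ‖y‖ ≤ ‖Js.adjoint (F θ)‖ := by rw [hJsdecomp]; exact hσy
    have t2 : ‖Js.adjoint (F θ)‖ - ‖(J θ).adjoint (F θ)‖ ≤ ε * ‖F θ‖ := by
      have h16 := norm_sub_norm_le (Js.adjoint (F θ)) ((J θ).adjoint (F θ))
      have h17 : ‖Js.adjoint (F θ) - (J θ).adjoint (F θ)‖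
          = ‖(J θ).adjoint (F θ) - Js.adjoint (F θ)‖ := norm_sub_rev _ _
      rw [h17] at h16
      exact le_trans h16 hadj
    have t3 : σ * (c₁⁻¹ * ‖F θ‖) ≤ σ * ‖y‖ := by
      apply mul_le_mul_of_nonneg_left _ (le_of_lt hσ0)
      rw [← hpy]
      exact hPYlow
    have t4 : σ * (c₁⁻¹ * ‖F θ‖) = 2 * ε * ‖F θ‖ := by
      rw [hε]
      exact arith_aux3 σ c₁ ‖F θ‖ (ne_of_gt hc₁0)
    have t5 : 2 * ε * ‖F θ‖ ≤ ‖Js.adjoint (F θ)‖ :=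
      le_trans (le_of_eq t4.symm) (le_trans t3 t1)
    calc ε * ‖F θ‖ = 2 * ε * ‖F θ‖ - ε * ‖F θ‖ := by ring
      _ ≤ ‖Js.adjoint (F θ)‖ - ε * ‖F θ‖ := sub_le_sub_right t5 _
      _ ≤ ‖(J θ).adjoint (F θ)‖ := sub_le_comm.mp t2
  have hgrad := (grad_half_normsq F θ (hFd θ)).gradient
  rw [hgrad]
  have hsq : (ε * ‖F θ‖)^2 ≤ ‖(J θ).adjoint (F θ)‖^2 :=
    pow_le_pow_left₀ (by positivity) hlow 2
  have h21 : 2 * μ * ((1/2 : ℝ) * ‖F θ‖^2) = (ε * ‖F θ‖)^2 := by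
    rw [hμdef]; ring
  rw [ge_iff_le, h21]
  exact hsq
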